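/- Define the equalized-odds unfairness ε_D^{EO}(f) = ∑_{y∈{0,1}} |R_D^{y,0}(f) − R_D^{y,1}(f)| where R_D^{y,a}(f) = E_D[f(X)_1|Y=y,A=a]. Then for any two domains D_i, D_j: ε_{D_j}^{EO}(f) ≤ ε_{D_i}^{EO}(f) + √2 ∑_{y,a∈{0,1}} d_JS(P_{D_j}^{X|Y=y,A=a}, P_{D_i}^{X|Y=y,A=a}). -/

import Mathlib

open MeasureTheory ProbabilityTheory Real
open scoped ENNReal

/-- Kullback–Leibler divergence (natural log), as a real number. -/
noncomputable def klDiv {α : Type*} [MeasurableSpace α] (P Q : Measure α) : ℝ :=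
  ∫ x, Real.log ((P.rnDeriv Q) x).toReal ∂P

/-- The midpoint (mixture) measure (P + Q)/2. -/
noncomputable def midM {α : Type*} [MeasurableSpace α] (P Q : Measure α) : Measure α :=
  (2⁻¹ : ℝ≥0∞) • (P + Q)

/-- Jensen–Shannon divergence. -/
noncomputable def jsDiv {α : Type*} [MeasurableSpace α] (P Q : Measure α) : ℝ :=
  2⁻¹ * klDiv P (midM P Q) + 2⁻¹ * klDiv Q (midM P Q)

/-- Jensen–Shannon distance. -/
noncomputable def jsDist {α : Type*} [MeasurableSpace α] (P Q : Measure α) : ℝ :=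
  Real.sqrt (jsDiv P Q)


lemma logDiffIneq {t : ℝ} (h0 : 0 ≤ t) (h1 : t < 1) :
    2*t ≤ Real.log (1+t) - Real.log (1-t) := by
  set F : ℝ → ℝ := fun s => Real.log (1+s) - Real.log (1-s) - 2*s with hF
  have hmono : MonotoneOn F (Set.Ico (0:ℝ) 1) := by
    apply monotoneOn_of_deriv_nonneg (convex_Ico 0 1)
    · apply ContinuousOn.sub
      apply ContinuousOn.sub
      · exact (continuousOn_const.add continuousOn_id).log
          (fun x hx => by have := hx.1; simp; nlinarith [hx.1])
      · exact (continuousOn_const.sub continuousOn_id).log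
          (fun x hx => by have := hx.2; simp; nlinarith [hx.2])
      · exact (continuousOn_const.mul continuousOn_id)
    all_goals {
      rw [interior_Ico]
      intro s hs
      obtain ⟨hs0, hs1⟩ := hs
      have hp : (0:ℝ) < 1 + s := by linarith
      have hm : (0:ℝ) < 1 - s := by linarith
      have d1 : HasDerivAt (fun x : ℝ => Real.log (1+x)) (1+s)⁻¹ s := by
        have := (Real.hasDerivAt_log hp.ne').comp s ((hasDerivAt_id s).const_add 1)
        simpa [Function.comp_def] using this
      have d2 : HasDerivAt (fun x : ℝ => Real.log (1-x)) (-(1-s)⁻¹) s := by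
        have := (Real.hasDerivAt_log hm.ne').comp s ((hasDerivAt_id s).const_sub 1)
        simpa [Function.comp_def] using this
      have d3 : HasDerivAt F ((1+s)⁻¹ - (-(1-s)⁻¹) - 2) s := by
        simpa [Pi.sub_def] using (d1.sub d2).sub ((hasDerivAt_id s).const_mul 2)
      first
      | exact d3.differentiableAt.differentiableWithinAt
      | { rw [d3.deriv]
          have e1 : 1 - s ≤ (1+s)⁻¹ := by
            rw [← one_div, le_div_iff₀ hp]; nlinarith
          have e2 : 1 + s ≤ (1-s)⁻¹ := by
            rw [← one_div, le_div_iff₀ hm]; nlinarith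
          linarith }
    }
  have h := hmono (Set.mem_Ico.2 ⟨le_refl 0, one_pos⟩) (Set.mem_Ico.2 ⟨h0, h1⟩) h0
  simp [hF] at h
  linarith

lemma ptIneq {t : ℝ} (h0 : 0 ≤ t) (h1 : t ≤ 1) :
    t^2 ≤ (1+t) * Real.log (1+t) + (1-t) * Real.log (1-t) := by
  rcases eq_or_lt_of_le h1 with rfl | h1
  · norm_num [Real.log_zero]
    nlinarith [Real.log_two_gt_d9]
  set G : ℝ → ℝ := fun s => (1+s) * Real.log (1+s) + (1-s) * Real.log (1-s) - s^2 with hG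
  have hmono : MonotoneOn G (Set.Ico (0:ℝ) 1) := by
    apply monotoneOn_of_deriv_nonneg (convex_Ico 0 1)
    · apply ContinuousOn.sub
      apply ContinuousOn.add
      · exact (continuousOn_const.add continuousOn_id).mul
          ((continuousOn_const.add continuousOn_id).log
            (fun x hx => by simp; nlinarith [hx.1]))
      · exact (continuousOn_const.sub continuousOn_id).mul
          ((continuousOn_const.sub continuousOn_id).log
            (fun x hx => by simp; nlinarith [hx.2]))
      · exact (continuousOn_id.pow 2)
    all_goals {
      rw [interior_Ico]
      intro s hs
      obtain ⟨hs0, hs1⟩ := hs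
      have hp : (0:ℝ) < 1 + s := by linarith
      have hm : (0:ℝ) < 1 - s := by linarith
      have d1 : HasDerivAt (fun x : ℝ => Real.log (1+x)) (1+s)⁻¹ s := by
        have := (Real.hasDerivAt_log hp.ne').comp s ((hasDerivAt_id s).const_add 1)
        simpa [Function.comp_def] using this
      have d2 : HasDerivAt (fun x : ℝ => Real.log (1-x)) (-(1-s)⁻¹) s := by
        have := (Real.hasDerivAt_log hm.ne').comp s ((hasDerivAt_id s).const_sub 1)
        simpa [Function.comp_def] using this
      have d3 : HasDerivAt (fun x : ℝ => (1+x) * Real.log (1+x))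
          (1 * Real.log (1+s) + (1+s) * (1+s)⁻¹) s :=
        ((hasDerivAt_id s).const_add 1).mul d1
      have d4 : HasDerivAt (fun x : ℝ => (1-x) * Real.log (1-x))
          ((-1) * Real.log (1-s) + (1-s) * (-(1-s)⁻¹)) s :=
        ((hasDerivAt_id s).const_sub 1).mul d2
      have d5 : HasDerivAt G (1 * Real.log (1+s) + (1+s) * (1+s)⁻¹
          + ((-1) * Real.log (1-s) + (1-s) * (-(1-s)⁻¹)) - 2*s) s := by
        have := (d3.add d4).sub ((hasDerivAt_pow 2 s))
        simpa [mul_comm, Pi.add_def, Pi.sub_def] using this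
      have hsimp : (1 * Real.log (1+s) + (1+s) * (1+s)⁻¹
          + ((-1) * Real.log (1-s) + (1-s) * (-(1-s)⁻¹)) - 2*s)
          = Real.log (1+s) - Real.log (1-s) - 2*s := by
        field_simp
        ring
      rw [hsimp] at d5
      first
      | exact d5.differentiableAt.differentiableWithinAt
      | { rw [d5.deriv]
          have := logDiffIneq hs0.le hs1
          linarith }
    }
  have h := hmono (Set.mem_Ico.2 ⟨le_refl 0, one_pos⟩) (Set.mem_Ico.2 ⟨h0, h1⟩) h0
  simp [hG] at h
  linarith

lemma keyPt {h : ℝ} (h0 : 0 ≤ h) (h2 : h ≤ 2) :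
    (h-1)^2 ≤ h * Real.log h + (2-h) * Real.log (2-h) := by
  rcases le_total 1 h with hc | hc
  · have := ptIneq (t := h - 1) (by linarith) (by linarith)
    have e1 : 1 + (h-1) = h := by ring
    have e2 : 1 - (h-1) = 2 - h := by ring
    rw [e1, e2] at this
    nlinarith [this]
  · have := ptIneq (t := 1 - h) (by linarith) (by linarith)
    have e1 : 1 + (1-h) = 2 - h := by ring
    have e2 : 1 - (1-h) = h := by ring
    rw [e1, e2] at this
    nlinarith [this]

lemma xlogx_bound {x : ℝ} (h0 : 0 ≤ x) (h2 : x ≤ 2) : |x * Real.log x| ≤ 2 := by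
  rcases eq_or_lt_of_le h0 with rfl | hx
  · simp
  rcases le_total x 1 with hc | hc
  · have hl : Real.log x ≤ 0 := Real.log_nonpos h0 hc
    have h3 : Real.log x⁻¹ ≤ x⁻¹ - 1 := Real.log_le_sub_one_of_pos (by positivity)
    rw [Real.log_inv] at h3
    have h4 : x * (-Real.log x) ≤ x * (x⁻¹ - 1) := by
      apply mul_le_mul_of_nonneg_left h3 hx.le
    have h5 : x * (x⁻¹ - 1) = 1 - x := by field_simp
    rw [abs_of_nonpos (mul_nonpos_of_nonneg_of_nonpos hx.le hl)]
    nlinarith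
  · have hl : 0 ≤ Real.log x := Real.log_nonneg hc
    have h3 : Real.log x ≤ x - 1 := Real.log_le_sub_one_of_pos hx
    rw [abs_of_nonneg (mul_nonneg hx.le hl)]
    nlinarith

lemma core {𝒳 : Type*} [MeasurableSpace 𝒳]
    (P Q : Measure 𝒳) [IsProbabilityMeasure P] [IsProbabilityMeasure Q]
    (f1 : 𝒳 → ℝ) (hf : Measurable f1) (hf0 : ∀ x, 0 ≤ f1 x) (hf1 : ∀ x, f1 x ≤ 1) :
    |∫ x, f1 x ∂P - ∫ x, f1 x ∂Q| ≤ Real.sqrt 2 * jsDist P Q := by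
  set M : Measure 𝒳 := midM P Q with hMdef
  have hMapply : ∀ s, M s = 2⁻¹ * (P s + Q s) := by
    intro s
    simp [hMdef, midM, Measure.add_apply, mul_add]
  haveI hMprob : IsProbabilityMeasure M := by
    constructor
    rw [hMapply]
    simp only [measure_univ]
    rw [one_add_one_eq_two, ENNReal.inv_mul_cancel two_ne_zero (by norm_num)]
  have hPM : P ≪ M := by
    refine Measure.AbsolutelyContinuous.mk (fun s _ hs => ?_)
    rw [hMapply] at hs
    simp only [mul_eq_zero, ENNReal.inv_eq_zero] at hs
    rcases hs with h | h
    · exact absurd h (by norm_num)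
    · exact le_antisymm (le_trans (le_add_right le_rfl) h.le) zero_le
  have hQM : Q ≪ M := by
    refine Measure.AbsolutelyContinuous.mk (fun s _ hs => ?_)
    rw [hMapply] at hs
    simp only [mul_eq_zero, ENNReal.inv_eq_zero] at hs
    rcases hs with h | h
    · exact absurd h (by norm_num)
    · exact le_antisymm (le_trans (le_add_left le_rfl) h.le) zero_le
  have h2M : (2 : ℝ≥0∞) • M = P + Q := by
    rw [hMdef, midM, smul_smul, ENNReal.mul_inv_cancel two_ne_zero (by norm_num), one_smul]
  have hsum : P.rnDeriv M + Q.rnDeriv M =ᵐ[M] fun _ => (2 : ℝ≥0∞) := by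
    have h1 := Measure.rnDeriv_add P Q M
    have h2 := Measure.rnDeriv_smul_left_of_ne_top M M (r := 2) (by norm_num)
    have h3 := M.rnDeriv_self
    rw [h2M] at h2
    filter_upwards [h1, h2, h3] with x hx1 hx2 hx3
    rw [← hx1, hx2, Pi.smul_apply, hx3, smul_eq_mul, mul_one]
  set g : 𝒳 → ℝ := fun x => (P.rnDeriv M x).toReal with hgdef
  have hg_meas : Measurable g := (Measure.measurable_rnDeriv P M).ennreal_toReal
  have hg0 : ∀ x, 0 ≤ g x := fun x => ENNReal.toReal_nonneg
  have haeB : ∀ᵐ x ∂M, (Q.rnDeriv M x).toReal = 2 - g x ∧ g x ≤ 2 := by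
    filter_upwards [hsum, Measure.rnDeriv_lt_top P M, Measure.rnDeriv_lt_top Q M]
      with x h1 h2 h3
    have hadd : g x + (Q.rnDeriv M x).toReal = 2 := by
      rw [hgdef]
      rw [← ENNReal.toReal_add h2.ne h3.ne]
      simp only [Pi.add_apply] at h1
      rw [h1]
      norm_num
    constructor
    · linarith
    · have := ENNReal.toReal_nonneg (a := Q.rnDeriv M x)
      linarith
  -- integral representations
  have hIP : ∫ x, f1 x ∂P = ∫ x, g x * f1 x ∂M := by
    have := integral_rnDeriv_smul (μ := P) (ν := M) hPM (f := f1)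
    simpa [smul_eq_mul] using this.symm
  have hIQ : ∫ x, f1 x ∂Q = ∫ x, (2 - g x) * f1 x ∂M := by
    have := integral_rnDeriv_smul (μ := Q) (ν := M) hQM (f := f1)
    rw [← this]
    apply integral_congr_ae
    filter_upwards [haeB] with x hx
    simp [hx.1]
  have hg_int : Integrable g M := by
    refine (integrable_const (2:ℝ)).mono' hg_meas.aestronglyMeasurable ?_
    filter_upwards [haeB] with x hx
    rw [Real.norm_eq_abs, abs_of_nonneg (hg0 x)]
    exact hx.2
  have hint1 : Integrable (fun x => g x * f1 x) M := by
    refine (integrable_const (2:ℝ)).mono' (hg_meas.mul hf).aestronglyMeasurable ?_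
    filter_upwards [haeB] with x hx
    rw [Real.norm_eq_abs, abs_mul, abs_of_nonneg (hg0 x), abs_of_nonneg (hf0 x)]
    nlinarith [hg0 x, hx.2, hf0 x, hf1 x]
  have hint2 : Integrable (fun x => (2 - g x) * f1 x) M := by
    refine (integrable_const (2:ℝ)).mono'
      (((measurable_const.sub hg_meas).mul hf)).aestronglyMeasurable ?_
    filter_upwards [haeB] with x hx
    rw [Real.norm_eq_abs, abs_mul]
    rw [abs_of_nonneg (by linarith [hx.2] : (0:ℝ) ≤ 2 - g x), abs_of_nonneg (hf0 x)]
    nlinarith [hg0 x, hf0 x, hf1 x]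
  have hg_mean : ∫ x, g x ∂M = 1 := by
    rw [hgdef, Measure.integral_toReal_rnDeriv hPM]
    simp
  have hdiff : ∫ x, f1 x ∂P - ∫ x, f1 x ∂Q
      = ∫ x, (g x - 1) * (2 * f1 x - 1) ∂M := by
    rw [hIP, hIQ, ← integral_sub hint1 hint2]
    have he : ∀ x, g x * f1 x - (2 - g x) * f1 x
        = (g x - 1) * (2 * f1 x - 1) + (g x - 1) := by intro x; ring
    simp_rw [he]
    have hgi1 : Integrable (fun x => g x - 1) M := hg_int.sub (integrable_const 1)
    rw [integral_add ?_ hgi1]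
    · rw [integral_sub hg_int (integrable_const 1), hg_mean]
      simp
    · refine (integrable_const (1:ℝ)).mono'
        (((hg_meas.sub measurable_const).mul
          ((hf.const_mul 2).sub measurable_const))).aestronglyMeasurable ?_
      filter_upwards [haeB] with x hx
      rw [Real.norm_eq_abs, abs_mul]
      have h1 : |g x - 1| ≤ 1 := abs_le.2 ⟨by linarith [hg0 x], by linarith [hx.2]⟩
      have h2 : |2 * f1 x - 1| ≤ 1 := abs_le.2 ⟨by linarith [hf0 x], by linarith [hf1 x]⟩
      nlinarith [abs_nonneg (g x - 1), abs_nonneg (2 * f1 x - 1)]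
  have hint_abs : Integrable (fun x => |g x - 1|) M := (hg_int.sub (integrable_const 1)).abs
  have habs : |∫ x, f1 x ∂P - ∫ x, f1 x ∂Q| ≤ ∫ x, |g x - 1| ∂M := by
    rw [hdiff, ← Real.norm_eq_abs]
    refine le_trans (norm_integral_le_integral_norm _) ?_
    refine integral_mono_ae (by
      refine (integrable_const (1:ℝ)).mono' ?_ ?_
      · exact (((hg_meas.sub measurable_const).mul
          ((hf.const_mul 2).sub measurable_const))).norm.aestronglyMeasurable
      · filter_upwards [haeB] with x hx
        simp only [Real.norm_eq_abs, abs_abs, abs_mul]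
        have h1 : |g x - 1| ≤ 1 := abs_le.2 ⟨by linarith [hg0 x], by linarith [hx.2]⟩
        have h2 : |2 * f1 x - 1| ≤ 1 := abs_le.2 ⟨by linarith [hf0 x], by linarith [hf1 x]⟩
        nlinarith [abs_nonneg (g x - 1), abs_nonneg (2 * f1 x - 1)]) hint_abs ?_
    filter_upwards [haeB] with x hx
    rw [Real.norm_eq_abs, abs_mul]
    have h2 : |2 * f1 x - 1| ≤ 1 := abs_le.2 ⟨by linarith [hf0 x], by linarith [hf1 x]⟩
    nlinarith [abs_nonneg (g x - 1)]
  -- Cauchy-Schwarz via variance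
  have hint_sq : Integrable (fun x => (g x - 1)^2) M := by
    refine (integrable_const (1:ℝ)).mono'
      (((hg_meas.sub measurable_const).pow measurable_const)).aestronglyMeasurable ?_
    filter_upwards [haeB] with x hx
    rw [Real.norm_eq_abs, abs_of_nonneg (sq_nonneg _)]
    have h1 : |g x - 1| ≤ 1 := abs_le.2 ⟨by linarith [hg0 x], by linarith [hx.2]⟩
    nlinarith [abs_nonneg (g x - 1), sq_abs (g x - 1)]
  have hCS : (∫ x, |g x - 1| ∂M)^2 ≤ ∫ x, (g x - 1)^2 ∂M := by
    have hu2 : MemLp (fun x => |g x - 1|) 2 M := by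
      refine (memLp_top_of_bound
        ((hg_meas.sub measurable_const).abs).aestronglyMeasurable 1 ?_).mono_exponent
        le_top
      filter_upwards [haeB] with x hx
      simp only [Real.norm_eq_abs, abs_abs, Pi.sub_apply]
      exact abs_le.2 ⟨by linarith [hg0 x], by linarith [hx.2]⟩
    have hv := variance_nonneg (fun x => |g x - 1|) M
    rw [variance_eq_sub hu2] at hv
    simp only [Pi.pow_apply, sq_abs] at hv
    linarith
  have hlog_meas : Measurable (fun x => g x * Real.log (g x)) :=
    hg_meas.mul (Real.measurable_log.comp hg_meas)
  have hlog_meas2 : Measurable (fun x => (2 - g x) * Real.log (2 - g x)) :=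
    (measurable_const.sub hg_meas).mul
      (Real.measurable_log.comp (measurable_const.sub hg_meas))
  have hInt1 : Integrable (fun x => g x * Real.log (g x)) M := by
    refine (integrable_const (2:ℝ)).mono' hlog_meas.aestronglyMeasurable ?_
    filter_upwards [haeB] with x hx
    rw [Real.norm_eq_abs]
    exact xlogx_bound (hg0 x) hx.2
  have hInt2 : Integrable (fun x => (2 - g x) * Real.log (2 - g x)) M := by
    refine (integrable_const (2:ℝ)).mono' hlog_meas2.aestronglyMeasurable ?_
    filter_upwards [haeB] with x hx
    rw [Real.norm_eq_abs]
    exact xlogx_bound (by linarith [hx.2]) (by linarith [hg0 x])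
  have hklP : klDiv P M = ∫ x, g x * Real.log (g x) ∂M := by
    rw [klDiv]
    have := integral_rnDeriv_smul (μ := P) (ν := M) hPM
      (f := fun x => Real.log ((P.rnDeriv M x).toReal))
    rw [← this]
    simp [smul_eq_mul, hgdef]
  have hklQ : klDiv Q M = ∫ x, (2 - g x) * Real.log (2 - g x) ∂M := by
    rw [klDiv]
    have := integral_rnDeriv_smul (μ := Q) (ν := M) hQM
      (f := fun x => Real.log ((Q.rnDeriv M x).toReal))
    rw [← this]
    apply integral_congr_ae
    filter_upwards [haeB] with x hx
    simp [smul_eq_mul, hx.1]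
  have h2js : ∫ x, (g x - 1)^2 ∂M ≤ 2 * jsDiv P Q := by
    have hmono : ∫ x, (g x - 1)^2 ∂M
        ≤ ∫ x, (g x * Real.log (g x) + (2 - g x) * Real.log (2 - g x)) ∂M := by
      refine integral_mono_ae hint_sq (hInt1.add hInt2) ?_
      filter_upwards [haeB] with x hx
      exact keyPt (hg0 x) hx.2
    rw [integral_add hInt1 hInt2] at hmono
    have : 2 * jsDiv P Q = klDiv P M + klDiv Q M := by
      rw [jsDiv, ← hMdef]; ring
    rw [this, hklP, hklQ]
    exact hmono
  have hfin : |∫ x, f1 x ∂P - ∫ x, f1 x ∂Q| ≤ Real.sqrt (2 * jsDiv P Q) := by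
    refine le_trans habs ?_
    calc ∫ x, |g x - 1| ∂M
        = Real.sqrt ((∫ x, |g x - 1| ∂M)^2) :=
          (Real.sqrt_sq (integral_nonneg fun x => abs_nonneg _)).symm
      _ ≤ Real.sqrt (2 * jsDiv P Q) := Real.sqrt_le_sqrt (le_trans hCS h2js)
  rwa [Real.sqrt_mul (by norm_num : (0:ℝ) ≤ 2), ← jsDist] at hfin

/-- equalized-odds unfairness transfer between two domains:
ε_{D_j}^{EO}(f) ≤ ε_{D_i}^{EO}(f) + √2·∑_{y,a} d_JS(P_{D_j}^{X|y,a}, P_{D_i}^{X|y,a}),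
where A=0,1 are encoded as false,true. -/
theorem stmt12 {𝒳 : Type*} [MeasurableSpace 𝒳]
    (νi νj : Bool → Bool → Measure 𝒳)
    (hνi : ∀ y a, IsProbabilityMeasure (νi y a))
    (hνj : ∀ y a, IsProbabilityMeasure (νj y a))
    (f1 : 𝒳 → ℝ) (hf : Measurable f1) (hf0 : ∀ x, 0 ≤ f1 x) (hf1 : ∀ x, f1 x ≤ 1) :
    ∑ y : Bool, |∫ x, f1 x ∂(νj y false) - ∫ x, f1 x ∂(νj y true)|
      ≤ ∑ y : Bool, |∫ x, f1 x ∂(νi y false) - ∫ x, f1 x ∂(νi y true)|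
        + Real.sqrt 2 * ∑ y : Bool, ∑ a : Bool, jsDist (νj y a) (νi y a) := by
  have key : ∀ y a : Bool, |∫ x, f1 x ∂(νj y a) - ∫ x, f1 x ∂(νi y a)|
      ≤ Real.sqrt 2 * jsDist (νj y a) (νi y a) := by
    intro y a
    haveI := hνi y a
    haveI := hνj y a
    exact core (νj y a) (νi y a) f1 hf hf0 hf1
  have tri : ∀ y : Bool,
      |∫ x, f1 x ∂(νj y false) - ∫ x, f1 x ∂(νj y true)|
        ≤ |∫ x, f1 x ∂(νi y false) - ∫ x, f1 x ∂(νi y true)|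
          + |∫ x, f1 x ∂(νj y false) - ∫ x, f1 x ∂(νi y false)|
          + |∫ x, f1 x ∂(νj y true) - ∫ x, f1 x ∂(νi y true)| := by
    intro y
    have h1 := abs_sub_le (∫ x, f1 x ∂(νj y false)) (∫ x, f1 x ∂(νi y false))
      (∫ x, f1 x ∂(νj y true))
    have h2 := abs_sub_le (∫ x, f1 x ∂(νi y false)) (∫ x, f1 x ∂(νi y true))
      (∫ x, f1 x ∂(νj y true))
    have h3 := abs_sub_comm (∫ x, f1 x ∂(νi y true)) (∫ x, f1 x ∂(νj y true))
    linarith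
  simp only [Fintype.sum_bool]
  have k1 := key true false
  have k2 := key true true
  have k3 := key false false
  have k4 := key false true
  have t1 := tri true
  have t2 := tri false
  nlinarith [Real.sqrt_nonneg 2, k1, k2, k3, k4, t1, t2]
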